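/- Let P be a finite set of points in the plane with minimum enclosing circle C(P) centered at c. Let p₁, p₂, p₃ ∈ P be three consecutive points in clockwise order on C(P) (no other points of P on the arc from p₁ to p₃ through p₂). If the clockwise angle at c from p₁ to p₃ is at most π, then p₂ is not critical, i.e., C(P \ {p₂}) = C(P). -/

import Mathlib

noncomputable section

open Metric Real

/-- `IsMEC c ρ P` : the circle with center `c` and radius `ρ` is the minimum
enclosing circle of `P` (here in the plane modeled by `ℂ`). -/
def IsMEC (c : ℂ) (ρ : ℝ) (P : Set ℂ) : Prop :=
  P ⊆ Metric.closedBall c ρ ∧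
    ∀ c' ρ', P ⊆ Metric.closedBall c' ρ' → ρ ≤ ρ' ∧ (ρ' = ρ → c' = c)

/-- The clockwise angle at `c` measured from the ray `c → a` to the ray
`c → b`, normalized to lie in `[0, 2π)`. -/
def cwAngle (c a b : ℂ) : ℝ :=
  if Complex.arg ((a - c) / (b - c)) < 0 then
    Complex.arg ((a - c) / (b - c)) + 2 * π
  else Complex.arg ((a - c) / (b - c))

lemma re_rot (z w : ℂ) (θ : ℝ) :
    (z * Complex.exp (-(θ:ℂ) * Complex.I) * (starRingEnd ℂ) w).re
      = (z * (starRingEnd ℂ) w).re * Real.cos θ + (z * (starRingEnd ℂ) w).im * Real.sin θ := by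
  rw [show -(θ:ℂ) * Complex.I = (↑(-θ):ℂ) * Complex.I by push_cast; ring, Complex.exp_mul_I]
  simp [Complex.mul_re, Complex.mul_im, Complex.cos_ofReal_re, Complex.sin_ofReal_re,
    Complex.cos_ofReal_im, Complex.sin_ofReal_im, Real.cos_neg, Real.sin_neg]
  ring

lemma cwAngle_rep (c a b : ℂ) (ha : a ≠ c) (hb : b ≠ c)
    (hab : ‖a - c‖ = ‖b - c‖) :
    b - c = (a - c) * Complex.exp (-(cwAngle c a b : ℂ) * Complex.I) := by
  have hb' : b - c ≠ 0 := sub_ne_zero.mpr hb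
  have ha' : a - c ≠ 0 := sub_ne_zero.mpr ha
  have habs : ‖(a - c) / (b - c)‖ = 1 := by
    rw [norm_div, hab, div_self (norm_ne_zero_iff.mpr hb')]
  have h0 := Complex.norm_mul_exp_arg_mul_I ((a - c) / (b - c))
  rw [habs] at h0
  norm_num at h0
  have key : Complex.exp ((cwAngle c a b : ℂ) * Complex.I) = (a - c) / (b - c) := by
    unfold cwAngle
    split_ifs with h
    · push_cast
      rw [add_mul, Complex.exp_add, h0]
      rw [show ((2:ℂ) * π * Complex.I) = (2 * π * Complex.I) by ring, Complex.exp_two_pi_mul_I,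
        mul_one]
    · exact h0
  have : (b - c) * Complex.exp ((cwAngle c a b : ℂ) * Complex.I) = a - c := by
    rw [key]; field_simp
  calc b - c = (b - c) * Complex.exp ((cwAngle c a b : ℂ) * Complex.I)
      * Complex.exp (-(cwAngle c a b : ℂ) * Complex.I) := by
        rw [mul_assoc, ← Complex.exp_add]; simp
    _ = (a - c) * Complex.exp (-(cwAngle c a b : ℂ) * Complex.I) := by rw [this]

/-- Key geometric lemma: any point on the arc of angle ≤ π between two points of the
circle of radius `ρ` covered by a ball of radius `ρ' ≤ ρ` is itself covered. -/
lemma arc_covered (ρ ρ' α β : ℝ) (z₁ w : ℂ) (hz : ‖z₁‖ = ρ)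
    (hα : 0 < α) (hαβ : α < β) (hβ : β ≤ π) (hρ' : ρ' ≤ ρ)
    (h1 : ‖z₁ - w‖ ≤ ρ')
    (h3 : ‖z₁ * Complex.exp (-(β:ℂ) * Complex.I) - w‖ ≤ ρ') :
    ‖z₁ * Complex.exp (-(α:ℂ) * Complex.I) - w‖ ≤ ρ' := by
  have hρ'0 : 0 ≤ ρ' := le_trans (norm_nonneg _) h1
  set x := (z₁ * (starRingEnd ℂ) w).re with hx
  set y := (z₁ * (starRingEnd ℂ) w).im with hy
  have nsq : ∀ θ : ℝ, Complex.normSq (z₁ * Complex.exp (-(θ:ℂ) * Complex.I) - w)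
      = ρ^2 + Complex.normSq w - 2 * (x * Real.cos θ + y * Real.sin θ) := by
    intro θ
    have habs : ‖z₁ * Complex.exp (-(θ:ℂ) * Complex.I)‖ = ρ := by
      rw [norm_mul, Complex.norm_exp]; simp [hz]
    have h2 : Complex.normSq (z₁ * Complex.exp (-(θ:ℂ) * Complex.I)) = ρ^2 := by
      rw [← Complex.sq_norm, habs]
    rw [Complex.normSq_sub, h2, re_rot]
  have sq_of : ∀ z : ℂ, ‖z‖ ≤ ρ' → Complex.normSq z ≤ ρ'^2 := by
    intro z h
    rw [← Complex.sq_norm]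
    exact pow_le_pow_left₀ (norm_nonneg _) h 2
  have of_sq : ∀ z : ℂ, Complex.normSq z ≤ ρ'^2 → ‖z‖ ≤ ρ' := by
    intro z h
    rw [← Complex.sq_norm] at h
    nlinarith [norm_nonneg z]
  set t := (ρ^2 + Complex.normSq w - ρ'^2) / 2 with ht
  have h1' : t ≤ x := by
    have := sq_of _ h1
    have e : Complex.normSq (z₁ - w) = ρ^2 + Complex.normSq w - 2 * x := by
      have := nsq 0
      simpa using this
    rw [e] at this; linarith
  have h3' : t ≤ x * Real.cos β + y * Real.sin β := by
    have := sq_of _ h3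
    rw [nsq β] at this; linarith
  have hw0 : 0 ≤ Complex.normSq w := Complex.normSq_nonneg w
  have ht0 : Complex.normSq w / 2 ≤ t := by
    have : ρ'^2 ≤ ρ^2 := by nlinarith
    simp only [ht]; linarith
  apply of_sq
  rw [nsq α]
  have goal2 : t ≤ x * Real.cos α + y * Real.sin α := by
    have hα' : α < π := lt_of_lt_of_le hαβ hβ
    have hsα : 0 < Real.sin α := Real.sin_pos_of_pos_of_lt_pi hα hα'
    have hsβα : 0 < Real.sin (β - α) := Real.sin_pos_of_pos_of_lt_pi (by linarith)
      (by linarith)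
    have iden : Real.sin β * (x * Real.cos α + y * Real.sin α)
        = Real.sin (β - α) * x + Real.sin α * (x * Real.cos β + y * Real.sin β) := by
      rw [Real.sin_sub]; ring
    rcases lt_or_eq_of_le hβ with hβπ | hβπ
    · have hsβ : 0 < Real.sin β := Real.sin_pos_of_pos_of_lt_pi (by linarith) hβπ
      have hsum : Real.sin β ≤ Real.sin (β - α) + Real.sin α := by
        have e := Real.sin_add (β - α) α
        rw [sub_add_cancel] at e
        nlinarith [Real.cos_le_one α, Real.cos_le_one (β - α)]
      nlinarith [mul_le_mul_of_nonneg_left h1' (le_of_lt hsβα),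
        mul_le_mul_of_nonneg_left h3' (le_of_lt hsα), ht0.trans h1']
    · have hsβ : Real.sin β = 0 := by rw [hβπ, Real.sin_pi]
      have hzero : Real.sin (β - α) * x + Real.sin α * (x * Real.cos β + y * Real.sin β) = 0 := by
        rw [← iden, hsβ]; ring
      have hsβα' : Real.sin (β - α) = Real.sin α := by
        rw [hβπ, Real.sin_pi_sub]
      have hsum0 : x + (x * Real.cos β + y * Real.sin β) = 0 := by
        rw [hsβα'] at hzero
        have h' : Real.sin α * (x + (x * Real.cos β + y * Real.sin β)) = 0 := by
          linear_combination hzero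
        exact (mul_eq_zero.mp h').resolve_left (ne_of_gt hsα)
      have ht' : t ≤ 0 := by linarith
      have hw : Complex.normSq w = 0 := le_antisymm (by linarith) hw0
      have hweq : w = 0 := Complex.normSq_eq_zero.mp hw
      subst hweq
      have hx0 : x = 0 := by simp [hx]
      have hy0 : y = 0 := by simp [hy]
      rw [hx0, hy0]
      linarith
  linarith

/-- Let `p₁, p₂, p₃` be three consecutive points of `P` in clockwise order on
the minimum enclosing circle of `P` (no other point of `P` lies on the open
clockwise arc from `p₁` to `p₃`, on which `p₂` lies).  If the clockwise angle at
the center from `p₁` to `p₃` is at most `π`, then `p₂` is non-critical: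
removing it does not change the minimum enclosing circle. -/
theorem middle_point_noncritical
    (P : Set ℂ) (hP : P.Finite) (c : ℂ) (ρ : ℝ) (hmec : IsMEC c ρ P)
    (p₁ p₂ p₃ : ℂ) (hp₁ : p₁ ∈ P) (hp₂ : p₂ ∈ P) (hp₃ : p₃ ∈ P)
    (hs₁ : p₁ ∈ Metric.sphere c ρ) (hs₂ : p₂ ∈ Metric.sphere c ρ)
    (hs₃ : p₃ ∈ Metric.sphere c ρ)
    (h₁₂ : p₁ ≠ p₂) (h₂₃ : p₂ ≠ p₃) (h₁₃ : p₁ ≠ p₃)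
    (hbet₁ : 0 < cwAngle c p₁ p₂) (hbet₂ : cwAngle c p₁ p₂ < cwAngle c p₁ p₃)
    (hconsec : ∀ q ∈ P, q ∈ Metric.sphere c ρ →
      0 < cwAngle c p₁ q → cwAngle c p₁ q < cwAngle c p₁ p₃ → q = p₂)
    (hangle : cwAngle c p₁ p₃ ≤ π) :
    IsMEC c ρ (P \ {p₂}) := by
  obtain ⟨hsub, hmin⟩ := hmec
  have hd₁ : ‖p₁ - c‖ = ρ := by
    have := mem_sphere.mp hs₁; rwa [Complex.dist_eq] at this
  have hd₂ : ‖p₂ - c‖ = ρ := by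
    have := mem_sphere.mp hs₂; rwa [Complex.dist_eq] at this
  have hd₃ : ‖p₃ - c‖ = ρ := by
    have := mem_sphere.mp hs₃; rwa [Complex.dist_eq] at this
  have hρ0 : 0 ≤ ρ := hd₁ ▸ norm_nonneg _
  have hρ : 0 < ρ := by
    rcases lt_or_eq_of_le hρ0 with h | h
    · exact h
    · exfalso
      apply h₁₂
      have e1 : p₁ = c := sub_eq_zero.mp (norm_eq_zero.mp (by rw [hd₁, ← h]))
      have e2 : p₂ = c := sub_eq_zero.mp (norm_eq_zero.mp (by rw [hd₂, ← h]))
      rw [e1, e2]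
  have h₁c : p₁ ≠ c := fun h => by
    rw [h, sub_self, norm_zero] at hd₁; exact absurd hd₁.symm (ne_of_gt hρ)
  have h₂c : p₂ ≠ c := fun h => by
    rw [h, sub_self, norm_zero] at hd₂; exact absurd hd₂.symm (ne_of_gt hρ)
  have h₃c : p₃ ≠ c := fun h => by
    rw [h, sub_self, norm_zero] at hd₃; exact absurd hd₃.symm (ne_of_gt hρ)
  have rep₂ : p₂ - c = (p₁ - c) * Complex.exp (-(cwAngle c p₁ p₂ : ℂ) * Complex.I) :=
    cwAngle_rep c p₁ p₂ h₁c h₂c (hd₁.trans hd₂.symm)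
  have rep₃ : p₃ - c = (p₁ - c) * Complex.exp (-(cwAngle c p₁ p₃ : ℂ) * Complex.I) :=
    cwAngle_rep c p₁ p₃ h₁c h₃c (hd₁.trans hd₃.symm)
  refine ⟨fun x hx => hsub hx.1, fun c' ρ' hsub' => ?_⟩
  rcases le_or_gt ρ' ρ with hle | hlt
  · -- show p₂ is covered anyway, then use minimality over all of P
    have hmem : ∀ q, q ∈ P → q ≠ p₂ → ‖q - c - (c' - c)‖ ≤ ρ' := by
      intro q hq hq2
      have : q ∈ Metric.closedBall c' ρ' := hsub' ⟨hq, by simpa using hq2⟩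
      rw [mem_closedBall, Complex.dist_eq] at this
      have e : q - c' = q - c - (c' - c) := by ring
      rwa [e] at this
    have h1 : ‖p₁ - c - (c' - c)‖ ≤ ρ' := hmem p₁ hp₁ h₁₂
    have h3 : ‖p₃ - c - (c' - c)‖ ≤ ρ' := hmem p₃ hp₃ (Ne.symm h₂₃)
    rw [rep₃] at h3
    have h2 : ‖(p₁ - c) * Complex.exp (-(cwAngle c p₁ p₂ : ℂ) * Complex.I)
        - (c' - c)‖ ≤ ρ' :=
      arc_covered ρ ρ' (cwAngle c p₁ p₂) (cwAngle c p₁ p₃) (p₁ - c) (c' - c)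
        hd₁ hbet₁ hbet₂ hangle hle h1 h3
    rw [← rep₂] at h2
    have hp₂mem : p₂ ∈ Metric.closedBall c' ρ' := by
      rw [mem_closedBall, Complex.dist_eq]
      have e : p₂ - c' = p₂ - c - (c' - c) := by ring
      rwa [e]
    have hPsub : P ⊆ Metric.closedBall c' ρ' := by
      intro q hq
      by_cases hq2 : q = p₂
      · rwa [hq2]
      · exact hsub' ⟨hq, by simpa using hq2⟩
    exact hmin c' ρ' hPsub
  · exact ⟨le_of_lt hlt, fun h => absurd h (ne_of_gt hlt)⟩
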